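/- Let $(g_j)$ be an orthonormal sequence in $L^2(\mathbb{S}^{n-1})$, $(\lambda_j) \in \ell^2$ real, $w$ a real-valued Schwartz function on $\mathbb{R}^n$, and $K$ a measurable subset of $\mathbb{S}^{n-1}$ containing $\bigcup_j \mathrm{supp}(g_j)$. Then $\left| \sum_j \lambda_j \int_{\mathbb{R}^n} |\widehat{g_j\mathrm{d}\sigma}(x)|^2 w(x)\,\mathrm{d}x \right| \leq \|(\lambda_j)\|_{\ell^2} \left( \int_{\mathbb{S}^{n-1}}\int_{\mathbb{S}^{n-1}} |\widehat{w}(\theta-\omega)|^2\,\mathrm{d}\sigma_K(\omega)\mathrm{d}\sigma_K(\theta) \right)^{1/2}$, where $\sigma_K = \mathbf{1}_K\mathrm{d}\sigma$. -/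

import Mathlib

open MeasureTheory Complex Real Function
open scoped InnerProductSpace MeasureTheory ENNReal NNReal


noncomputable def sphereMeasure (n : ℕ) : Measure (EuclideanSpace ℝ (Fin n)) :=
  (μH[(n:ℝ)-1]).restrict (Metric.sphere 0 1)


noncomputable def ft {d : ℕ} (u : EuclideanSpace ℝ (Fin d) → ℂ)
    (ξ : EuclideanSpace ℝ (Fin d)) : ℂ :=
  ∫ y, u y * Complex.exp (-(2 * π * Complex.I) * ((⟪y, ξ⟫_ℝ : ℝ) : ℂ))

noncomputable def extOp {n : ℕ} (μ : Measure (EuclideanSpace ℝ (Fin n)))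
    (g : EuclideanSpace ℝ (Fin n) → ℂ) (x : EuclideanSpace ℝ (Fin n)) : ℂ :=
  ∫ ξ, g ξ * Complex.exp (-(2 * π * Complex.I) * ((⟪x, ξ⟫_ℝ : ℝ) : ℂ)) ∂μ

set_option maxHeartbeats 1000000 in
lemma sphere_hausdorff_lt_top (n : ℕ) :
    μH[(n:ℝ)-1] (Metric.sphere (0 : EuclideanSpace ℝ (Fin n)) 1) < ⊤ := by
  cases n with
  | zero =>
      have : Metric.sphere (0 : EuclideanSpace ℝ (Fin 0)) 1 = ∅ := by
        ext x
        simp [Subsingleton.elim x 0]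
      simp [this]
  | succ m =>
      set d : ℝ := (m : ℝ) with hd
      have hdn : ((m + 1 : ℕ) : ℝ) - 1 = d := by push_cast; ring
      rw [hdn]
      set Q : (Fin m → ℝ) → ℝ := fun y => ∑ j, (y j) ^ 2 with hQ
      set Φ : Fin (m+1) → ℝ → (Fin m → ℝ) → EuclideanSpace ℝ (Fin (m+1)) :=
        fun i ε y => WithLp.toLp 2 (Fin.insertNth i (ε * Real.sqrt (1 - Q y)) y : ∀ _ : Fin (m+1), ℝ) with hΦ
      set B : Set (Fin m → ℝ) := {y | Q y ≤ 1 - 1/(m+1)} with hB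
      have hcover : Metric.sphere (0 : EuclideanSpace ℝ (Fin (m+1))) 1 ⊆
          ⋃ i : Fin (m+1), (Φ i 1 '' B ∪ Φ i (-1) '' B) := by
        intro x hx
        have hx1 : ∑ k, (x k) ^ 2 = 1 := by
          have h1 : ‖x‖ = 1 := by simpa using mem_sphere_zero_iff_norm.mp hx
          have h2 := EuclideanSpace.norm_eq x
          rw [h1] at h2
          have h3 : (∑ k, ‖x k‖ ^ 2) = 1 := Real.sqrt_eq_one.mp h2.symm
          simpa [Real.norm_eq_abs, _root_.sq_abs] using h3
        have hex : ∃ i, 1/(m+1 : ℝ) ≤ (x i) ^ 2 := by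
          by_contra h
          push_neg at h
          have hlt : ∑ k, (x k) ^ 2 < ∑ _k : Fin (m+1), 1/(m+1 : ℝ) :=
            Finset.sum_lt_sum_of_nonempty (by simp) fun k _ => h k
          rw [hx1, Finset.sum_const] at hlt
          have : (m + 1 : ℝ) ≠ 0 := by positivity
          rw [Finset.card_univ, Fintype.card_fin, nsmul_eq_mul] at hlt
          push_cast at hlt
          rw [mul_one_div_cancel this] at hlt
          exact lt_irrefl _ hlt
        obtain ⟨i, hi⟩ := hex
        have hsum := Fin.sum_univ_succAbove (fun k => (x k) ^ 2) i
        rw [hx1] at hsum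
        have hQr : Q (i.removeNth x) = ∑ j, (x (i.succAbove j)) ^ 2 := by
          simp [hQ, Fin.removeNth]
        have hQval : Q (i.removeNth x) = 1 - (x i) ^ 2 := by rw [hQr]; linarith
        have hyB : (i.removeNth x) ∈ B := by
          simp only [hB, Set.mem_setOf_eq, hQval]; linarith
        have hsq : Real.sqrt (1 - Q (i.removeNth x)) = |x i| := by
          rw [hQval]
          simp [Real.sqrt_sq_eq_abs]
        refine Set.mem_iUnion.mpr ⟨i, ?_⟩
        rcases le_or_gt 0 (x i) with hxi | hxi
        · rw [_root_.abs_of_nonneg hxi] at hsq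
          exact Or.inl ⟨i.removeNth x, hyB, by
            simp only [hΦ, hsq, one_mul]; exact congrArg (WithLp.toLp 2) (Fin.insertNth_self_removeNth i x.ofLp)⟩
        · rw [_root_.abs_of_neg hxi] at hsq
          exact Or.inr ⟨i.removeNth x, hyB, by
            simp only [hΦ, hsq, neg_mul, one_mul, neg_neg]
            exact congrArg (WithLp.toLp 2) (Fin.insertNth_self_removeNth i x.ofLp)⟩
      have hd0 : (0:ℝ) ≤ d := by positivity
      have hlip : ∀ (i : Fin (m+1)) (ε : ℝ), ε^2 = 1 →
          LipschitzOnWith (((m+1)^2 : ℝ≥0)) (Φ i ε) B := by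
        intro i ε hε
        apply LipschitzOnWith.of_dist_le_mul
        intro y hy z hz
        set D := dist y z with hD
        have hD0 : 0 ≤ D := dist_nonneg
        have hj : ∀ j, |y j - z j| ≤ D := by
          intro j
          have := dist_le_pi_dist y z j
          rwa [Real.dist_eq] at this
        have hQy : Q y ≤ 1 - 1/(m+1) := hy
        have hQz : Q z ≤ 1 - 1/(m+1) := hz
        have hby : ∀ j, |y j| ≤ 1 := by
          intro j
          have h1 : (y j)^2 ≤ Q y := Finset.single_le_sum (fun k _ => sq_nonneg (y k)) (Finset.mem_univ j)
          have h2 : (y j)^2 ≤ 1 := by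
            have : (1:ℝ)/(m+1) ≥ 0 := by positivity
            linarith
          nlinarith [abs_nonneg (y j), _root_.sq_abs (y j)]
        have hbz : ∀ j, |z j| ≤ 1 := by
          intro j
          have h1 : (z j)^2 ≤ Q z := Finset.single_le_sum (fun k _ => sq_nonneg (z k)) (Finset.mem_univ j)
          have h2 : (z j)^2 ≤ 1 := by
            have : (1:ℝ)/(m+1) ≥ 0 := by positivity
            linarith
          nlinarith [abs_nonneg (z j), _root_.sq_abs (z j)]
        have hQd : |Q y - Q z| ≤ 2 * m * D := by
          have h1 : Q y - Q z = ∑ j, ((y j)^2 - (z j)^2) := by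
            rw [hQ]; rw [Finset.sum_sub_distrib]
          rw [h1]
          calc |∑ j, ((y j)^2 - (z j)^2)| ≤ ∑ j, |(y j)^2 - (z j)^2| :=
                Finset.abs_sum_le_sum_abs _ _
            _ ≤ ∑ _j : Fin m, 2 * D := by
                apply Finset.sum_le_sum
                intro j _
                have : (y j)^2 - (z j)^2 = (y j - z j) * (y j + z j) := by ring
                rw [this, abs_mul]
                have h2 : |y j + z j| ≤ 2 := by
                  calc |y j + z j| ≤ |y j| + |z j| := abs_add_le _ _
                    _ ≤ 2 := by linarith [hby j, hbz j]
                calc |y j - z j| * |y j + z j| ≤ D * 2 :=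
                      mul_le_mul (hj j) h2 (abs_nonneg _) hD0
                  _ = 2 * D := by ring
            _ = 2 * m * D := by simp [Finset.sum_const]; ring
        set a := Real.sqrt (1 - Q y) with ha
        set b := Real.sqrt (1 - Q z) with hb
        have h1m : (0:ℝ) < 1/(m+1) := by positivity
        have ha2 : a^2 = 1 - Q y := Real.sq_sqrt (by linarith)
        have hb2 : b^2 = 1 - Q z := Real.sq_sqrt (by linarith)
        have halb : Real.sqrt (1/(m+1)) ≤ a := Real.sqrt_le_sqrt (by linarith)
        have hblb : Real.sqrt (1/(m+1)) ≤ b := Real.sqrt_le_sqrt (by linarith)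
        have hc2 : (Real.sqrt (1/(m+1)))^2 = 1/(m+1) := Real.sq_sqrt (le_of_lt h1m)
        have hc0 : 0 < Real.sqrt (1/(m+1)) := Real.sqrt_pos.mpr h1m
        have hab : (a - b)^2 ≤ m^2 * (m+1) * D^2 := by
          have hkey : (a-b)*(a+b) = Q z - Q y := by nlinarith [ha2, hb2]
          have habpos : 2 * Real.sqrt (1/(m+1)) ≤ a + b := by linarith
          have h4 : (a-b)^2 * (a+b)^2 = (Q z - Q y)^2 := by nlinarith [hkey]
          have h5 : (Q z - Q y)^2 ≤ (2*m*D)^2 := by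
            nlinarith [hQd, abs_nonneg (Q y - Q z), _root_.sq_abs (Q y - Q z),
              mul_self_le_mul_self (abs_nonneg (Q y - Q z)) hQd]
          have hm1 : (0:ℝ) < m + 1 := by positivity
          have hc2' : (Real.sqrt (1/(m+1)))^2 * (m+1) = 1 := by
            rw [hc2]; field_simp
          have h6' : (4:ℝ) ≤ (a+b)^2 * (m+1) := by
            nlinarith [habpos, hc0, hc2', sq_nonneg (a + b - 2*Real.sqrt (1/(m+1))), hm1]
          have e1 : (a-b)^2 * 4 ≤ (a-b)^2 * ((a+b)^2*(m+1)) :=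
            mul_le_mul_of_nonneg_left h6' (sq_nonneg _)
          have e2 : (a-b)^2 * ((a+b)^2*(m+1)) = (Q z - Q y)^2 * (m+1) := by
            rw [← h4]; ring
          have e3 : (Q z - Q y)^2 * (m+1) ≤ (2*m*D)^2*(m+1) :=
            mul_le_mul_of_nonneg_right h5 hm1.le
          have e4 : (2*m*D)^2*((m:ℝ)+1) = 4*(m^2*(m+1)*D^2) := by ring
          linarith [e1, e2.le, e2.ge, e3, e4.le, e4.ge]
        -- compute the euclidean distance
        have hΦy : Φ i ε y = (WithLp.toLp 2 (Fin.insertNth i (ε*a) y : ∀ _ : Fin (m+1), ℝ) :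
            EuclideanSpace ℝ (Fin (m+1))) := by rw [hΦ]
        have hΦz : Φ i ε z = (WithLp.toLp 2 (Fin.insertNth i (ε*b) z : ∀ _ : Fin (m+1), ℝ) :
            EuclideanSpace ℝ (Fin (m+1))) := by rw [hΦ]
        rw [hΦy, hΦz, EuclideanSpace.dist_eq]
        simp only [WithLp.ofLp_toLp]
        have hsum : ∑ k, dist ((Fin.insertNth i (ε*a) y : ∀ _ : Fin (m+1), ℝ) k)
              ((Fin.insertNth i (ε*b) z : ∀ _ : Fin (m+1), ℝ) k) ^ 2
            = (ε*a - ε*b)^2 + ∑ j, (y j - z j)^2 := by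
          rw [Fin.sum_univ_succAbove (fun k =>
            dist ((Fin.insertNth i (ε*a) y : ∀ _ : Fin (m+1), ℝ) k)
              ((Fin.insertNth i (ε*b) z : ∀ _ : Fin (m+1), ℝ) k) ^ 2) i]
          simp [Real.dist_eq, _root_.sq_abs]
        have hsumj : ∑ j, (y j - z j)^2 ≤ m * D^2 := by
          calc ∑ j, (y j - z j)^2 ≤ ∑ _j : Fin m, D^2 := by
                apply Finset.sum_le_sum
                intro j _
                nlinarith [hj j, _root_.sq_abs (y j - z j), abs_nonneg (y j - z j)]
            _ = m * D^2 := by simp [Finset.sum_const]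
        have htot : (ε*a - ε*b)^2 + ∑ j, (y j - z j)^2 ≤ (((m:ℝ)+1)^2 * D)^2 := by
          have he : (ε*a - ε*b)^2 = ε^2 * (a-b)^2 := by ring
          rw [he, hε, one_mul]
          have h9 : ((((m:ℝ)+1)^2) * D)^2 = ((m:ℝ)+1)^4 * D^2 := by ring
          rw [h9]
          nlinarith [hab, hsumj, sq_nonneg D, hD0]
        rw [hsum]
        have h2 : Real.sqrt ((ε*a - ε*b)^2 + ∑ j, (y j - z j)^2) ≤ ((m:ℝ)+1)^2 * D := by
          rw [show (((m:ℝ)+1)^2 * D) = Real.sqrt ((((m:ℝ)+1)^2 * D)^2) from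
            (Real.sqrt_sq (by positivity)).symm]
          exact Real.sqrt_le_sqrt htot
        refine le_trans h2 (le_of_eq ?_)
        congr 1
        try push_cast
        try ring
      -- measure of B
      have hvol : (μH[d] : Measure (Fin m → ℝ)) = volume := by
        have h := MeasureTheory.hausdorffMeasure_pi_real (ι := Fin m)
        rw [Fintype.card_fin m] at h
        rw [hd]
        exact h
      have hBsub : B ⊆ Metric.closedBall (0 : Fin m → ℝ) 1 := by
        intro y hy
        rw [Metric.mem_closedBall]
        rw [dist_pi_le_iff (by norm_num : (0:ℝ) ≤ 1)]
        intro j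
        have h1 : (y j)^2 ≤ Q y := Finset.single_le_sum (fun k _ => sq_nonneg (y k)) (Finset.mem_univ j)
        have hQy : Q y ≤ 1 - 1/(m+1) := hy
        have : (1:ℝ)/(m+1) ≥ 0 := by positivity
        rw [Real.dist_eq]
        simp only [Pi.zero_apply, sub_zero]
        nlinarith [abs_nonneg (y j), _root_.sq_abs (y j)]
      have hBfin : μH[d] B < ⊤ := by
        rw [hvol]
        exact lt_of_le_of_lt (measure_mono hBsub)
          (isCompact_closedBall (0 : Fin m → ℝ) 1).measure_lt_top
      have himfin : ∀ (i : Fin (m+1)) (ε : ℝ), ε^2 = 1 → μH[d] (Φ i ε '' B) < ⊤ := by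
        intro i ε hε
        refine lt_of_le_of_lt ((hlip i ε hε).hausdorffMeasure_image_le hd0) ?_
        exact ENNReal.mul_lt_top
          (ENNReal.rpow_lt_top_of_nonneg hd0 ENNReal.coe_ne_top) hBfin
      calc μH[d] (Metric.sphere (0 : EuclideanSpace ℝ (Fin (m+1))) 1)
          ≤ μH[d] (⋃ i : Fin (m+1), (Φ i 1 '' B ∪ Φ i (-1) '' B)) := measure_mono hcover
        _ ≤ ∑ i : Fin (m+1), μH[d] (Φ i 1 '' B ∪ Φ i (-1) '' B) := measure_iUnion_fintype_le _ _
        _ < ⊤ := by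
            apply ENNReal.sum_lt_top.mpr
            intro i _
            refine lt_of_le_of_lt (measure_union_le _ _) ?_
            exact ENNReal.add_lt_top.mpr
              ⟨himfin i 1 (by norm_num), himfin i (-1) (by norm_num)⟩

lemma norm_cexp_eq_one (r : ℝ) :
    ‖Complex.exp (-(2 * (π:ℂ) * Complex.I) * (r : ℂ))‖ = 1 := by
  rw [show -(2 * (π:ℂ) * Complex.I) * (r:ℂ) = ((-(2*π*r) : ℝ) : ℂ) * Complex.I by
    push_cast; ring]
  exact Complex.norm_exp_ofReal_mul_I _

lemma integrable_conj' {α : Type*} [MeasurableSpace α] {μ : Measure α} {f : α → ℂ}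
    (h : Integrable f μ) : Integrable (fun x => (starRingEnd ℂ) (f x)) μ := by
  simpa using h.norm.mono' (RCLike.continuous_conj.comp_aestronglyMeasurable h.1)
    (Filter.Eventually.of_forall (fun x => by simp))

lemma key_identity {n : ℕ} (σ : Measure (EuclideanSpace ℝ (Fin n))) [IsFiniteMeasure σ]
    (w : SchwartzMap (EuclideanSpace ℝ (Fin n)) ℝ) (G : EuclideanSpace ℝ (Fin n) → ℂ)
    (hG : Integrable G σ) :
    ((∫ x, ‖extOp σ G x‖ ^ 2 * w x : ℝ) : ℂ)
      = ∫ p, G p.1 * (starRingEnd ℂ) (G p.2) * ft (fun x => ((w x : ℝ) : ℂ)) (p.1 - p.2)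
          ∂(σ.prod σ) := by
  set wC : EuclideanSpace ℝ (Fin n) → ℂ := fun x => ((w x : ℝ) : ℂ) with hwC
  have hw_int : Integrable wC (volume : Measure (EuclideanSpace ℝ (Fin n))) := (SchwartzMap.integrable w).ofReal
  set E : EuclideanSpace ℝ (Fin n) → EuclideanSpace ℝ (Fin n) → ℂ :=
    fun x ξ => Complex.exp (-(2 * (π:ℂ) * Complex.I) * ((⟪x, ξ⟫_ℝ : ℝ) : ℂ)) with hE
  set M : EuclideanSpace ℝ (Fin n) × (EuclideanSpace ℝ (Fin n) × EuclideanSpace ℝ (Fin n)) → ℂ :=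
    fun q => (wC q.1 * (G q.2.1 * (starRingEnd ℂ) (G q.2.2))) * E q.1 (q.2.1 - q.2.2) with hM
  have hE_cont : Continuous fun q : EuclideanSpace ℝ (Fin n) × EuclideanSpace ℝ (Fin n) => E q.1 q.2 := by
    apply Complex.continuous_exp.comp
    exact (continuous_const.mul (Complex.continuous_ofReal.comp continuous_inner))
  have hf1 : Integrable (fun q : EuclideanSpace ℝ (Fin n) × (EuclideanSpace ℝ (Fin n) × EuclideanSpace ℝ (Fin n)) => wC q.1 * (G q.2.1 * (starRingEnd ℂ) (G q.2.2)))
      (volume.prod (σ.prod σ)) :=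
    hw_int.mul_prod (hG.mul_prod (integrable_conj' hG))
  have hM_aesm : AEStronglyMeasurable M (volume.prod (σ.prod σ)) := by
    apply hf1.1.mul
    exact (hE_cont.comp (continuous_fst.prodMk
      ((continuous_fst.comp continuous_snd).sub
        (continuous_snd.comp continuous_snd)))).aestronglyMeasurable
  have hM_int : Integrable M (volume.prod (σ.prod σ)) := by
    apply hf1.norm.mono' hM_aesm
    filter_upwards with q
    rw [hM]
    simp only [norm_mul]
    rw [norm_cexp_eq_one]
    simp [norm_mul]
  have hswap := integral_integral_swap (f := fun x p => M (x, p)) hM_int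
  -- LHS of swap equals the real integral
  have hL : ∫ x, ∫ p, M (x, p) ∂(σ.prod σ) = ((∫ x, ‖extOp σ G x‖ ^ 2 * w x : ℝ) : ℂ) := by
    have hx : ∀ x : EuclideanSpace ℝ (Fin n), ∫ p, M (x, p) ∂(σ.prod σ)
        = wC x * ((‖extOp σ G x‖ ^ 2 : ℝ) : ℂ) := by
      intro x
      have h1 : ∀ p : EuclideanSpace ℝ (Fin n) × EuclideanSpace ℝ (Fin n), M (x, p)
          = wC x * ((G p.1 * E x p.1) * ((starRingEnd ℂ) (G p.2 * E x p.2))) := by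
        intro p
        have hsub : E x (p.1 - p.2) = E x p.1 * (starRingEnd ℂ) (E x p.2) := by
          rw [hE]
          simp only
          rw [← Complex.exp_conj]
          rw [← Complex.exp_add]
          congr 1
          rw [inner_sub_right]
          push_cast
          simp [map_mul, map_ofNat, Complex.conj_I, Complex.conj_ofReal]
          ring
        rw [hM]
        simp only
        rw [hsub, map_mul]
        ring
      rw [integral_congr_ae (Filter.Eventually.of_forall h1)]
      rw [integral_const_mul]
      rw [integral_prod_mul (f := fun θ => G θ * E x θ)
        (g := fun ω => (starRingEnd ℂ) (G ω * E x ω))]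
      rw [integral_conj]
      have hext : ∫ θ, G θ * E x θ ∂σ = extOp σ G x := rfl
      rw [hext, Complex.mul_conj]
      congr 1
      rw [Complex.normSq_eq_norm_sq]
    rw [integral_congr_ae (Filter.Eventually.of_forall hx)]
    rw [show (fun x => wC x * ((‖extOp σ G x‖ ^ 2 : ℝ) : ℂ))
        = fun x => ((w x * ‖extOp σ G x‖ ^ 2 : ℝ) : ℂ) by
      funext x; rw [hwC]; push_cast; ring]
    have hcomm : (∫ x, ‖extOp σ G x‖ ^ 2 * w x) = ∫ x, w x * ‖extOp σ G x‖ ^ 2 := by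
      apply integral_congr_ae; filter_upwards with x; ring
    rw [hcomm]
    exact integral_ofReal
  -- RHS of swap
  have hR : ∫ p, ∫ x, M (x, p) ∂(volume : Measure (EuclideanSpace ℝ (Fin n))) ∂(σ.prod σ)
      = ∫ p, G p.1 * (starRingEnd ℂ) (G p.2) * ft wC (p.1 - p.2) ∂(σ.prod σ) := by
    apply integral_congr_ae
    filter_upwards with p
    have h1 : ∀ x : EuclideanSpace ℝ (Fin n), M (x, p)
        = (G p.1 * (starRingEnd ℂ) (G p.2)) * (wC x * E x (p.1 - p.2)) := by
      intro x; rw [hM]; simp only; ring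
    rw [integral_congr_ae (Filter.Eventually.of_forall h1), integral_const_mul]
    rfl
  have hswap' : ∫ x, ∫ p, M (x, p) ∂(σ.prod σ) ∂(volume : Measure (EuclideanSpace ℝ (Fin n)))
      = ∫ p, ∫ x, M (x, p) ∂(volume : Measure (EuclideanSpace ℝ (Fin n))) ∂(σ.prod σ) := hswap
  rw [← hL, hswap', hR]

theorem statement19 (n : ℕ) (g : ℕ → EuclideanSpace ℝ (Fin n) → ℂ)
    (hmem : ∀ j, MemLp (g j) 2 (sphereMeasure n))
    (horth : ∀ j k, (∫ ξ, (starRingEnd ℂ) (g j ξ) * g k ξ ∂(sphereMeasure n))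
      = if j = k then 1 else 0)
    (l : ℕ → ℝ) (hl : Summable (fun j => l j ^ 2))
    (w : SchwartzMap (EuclideanSpace ℝ (Fin n)) ℝ)
    (K : Set (EuclideanSpace ℝ (Fin n))) (hKs : K ⊆ Metric.sphere 0 1)
    (hKm : MeasurableSet K) (hsupp : ∀ j, Function.support (g j) ⊆ K) :
    |∑' j, l j * ∫ x, ‖extOp (sphereMeasure n) (g j) x‖ ^ 2 * w x|
      ≤ Real.sqrt (∑' j, l j ^ 2) *
        Real.sqrt (∫ θ in K, ∫ ω in K,
          ‖ft (fun x => (w x : ℂ)) (θ - ω)‖ ^ 2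
            ∂(sphereMeasure n) ∂(sphereMeasure n)) := by
  classical
  set σ := sphereMeasure n with hσdef
  haveI hfinσ : IsFiniteMeasure σ := ⟨by
    rw [hσdef, sphereMeasure, Measure.restrict_apply_univ]
    exact sphere_hausdorff_lt_top n⟩
  set wC : EuclideanSpace ℝ (Fin n) → ℂ := fun x => ((w x : ℝ) : ℂ) with hwC
  set ker : EuclideanSpace ℝ (Fin n) × EuclideanSpace ℝ (Fin n) → ℂ :=
    fun p => ft wC (p.1 - p.2) with hkerdef
  set Kind : EuclideanSpace ℝ (Fin n) → ℂ := K.indicator (fun _ => (1:ℂ)) with hKinddef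
  set K' : EuclideanSpace ℝ (Fin n) × EuclideanSpace ℝ (Fin n) → ℂ :=
    fun p => Kind p.1 * Kind p.2 * ker p with hK'def
  set e : ℕ → EuclideanSpace ℝ (Fin n) × EuclideanSpace ℝ (Fin n) → ℂ :=
    fun j p => (starRingEnd ℂ) (g j p.1) * g j p.2 with hedef
  set r : ℕ → ℝ := fun j => ∫ x, ‖extOp σ (g j) x‖ ^ 2 * w x with hrdef
  have hgint : ∀ j, Integrable (g j) σ := fun j => (hmem j).integrable one_le_two
  -- measurability of ft wC
  have hft_sm : StronglyMeasurable (ft wC) := by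
    apply MeasureTheory.StronglyMeasurable.integral_prod_right
      (f := fun ξ y => wC y * Complex.exp (-(2 * (π:ℂ) * Complex.I) * ((⟪y, ξ⟫_ℝ : ℝ) : ℂ)))
    apply Continuous.stronglyMeasurable
    apply Continuous.mul
    · exact (Complex.continuous_ofReal.comp w.continuous).comp continuous_snd
    · apply Complex.continuous_exp.comp
      apply continuous_const.mul
      exact Complex.continuous_ofReal.comp
        ((continuous_inner (𝕜 := ℝ)).comp (continuous_snd.prodMk continuous_fst))
  have hker_sm : StronglyMeasurable ker :=
    hft_sm.comp_measurable (measurable_fst.sub measurable_snd)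
  -- bound for ft wC
  set Cw : ℝ := ∫ x, ‖w x‖ with hCw
  have hft_bd : ∀ ξ, ‖ft wC ξ‖ ≤ Cw := by
    intro ξ
    refine le_trans (norm_integral_le_integral_norm _) (le_of_eq ?_)
    apply integral_congr_ae
    filter_upwards with y
    rw [norm_mul, norm_cexp_eq_one, mul_one, hwC]
    simp
  have hCw0 : 0 ≤ Cw := by rw [hCw]; positivity
  -- K' in L²
  have hK'_aesm : AEStronglyMeasurable K' (σ.prod σ) := by
    apply StronglyMeasurable.aestronglyMeasurable
    exact (((stronglyMeasurable_const.indicator hKm).comp_measurable measurable_fst).mul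
      ((stronglyMeasurable_const.indicator hKm).comp_measurable measurable_snd)).mul hker_sm
  have hKind_bd : ∀ θ, ‖Kind θ‖ ≤ 1 := by
    intro θ
    rw [hKinddef]
    by_cases h : θ ∈ K <;> simp [Set.indicator_apply, h]
  have hK'_mem : MemLp K' 2 (σ.prod σ) := by
    apply MemLp.of_bound hK'_aesm Cw
    filter_upwards with p
    rw [hK'def]
    simp only [norm_mul]
    calc ‖Kind p.1‖ * ‖Kind p.2‖ * ‖ker p‖ ≤ 1 * 1 * Cw := by
          apply mul_le_mul _ (hft_bd _) (norm_nonneg _) (by norm_num)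
          rw [show (1:ℝ) * 1 = 1 by norm_num]
          exact mul_le_one₀ (hKind_bd _) (norm_nonneg _) (hKind_bd _)
      _ = Cw := by ring
  -- e j in L²
  have he_aesm : ∀ j, AEStronglyMeasurable (e j) (σ.prod σ) := by
    intro j
    exact ((RCLike.continuous_conj.comp_aestronglyMeasurable (hmem j).1).comp_fst).mul ((hmem j).1.comp_snd)
  have he_mem : ∀ j, MemLp (e j) 2 (σ.prod σ) := by
    intro j
    rw [memLp_two_iff_integrable_sq_norm (he_aesm j)]
    have h1 : Integrable (fun θ => ‖g j θ‖ ^ 2) σ :=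
      (memLp_two_iff_integrable_sq_norm (hmem j).1).mp (hmem j)
    apply (h1.mul_prod h1).congr
    filter_upwards with p
    rw [hedef]
    simp [norm_mul, mul_pow]
  set v : ℕ → Lp ℂ 2 (σ.prod σ) := fun j => (he_mem j).toLp (e j) with hvdef
  set x0 : Lp ℂ 2 (σ.prod σ) := hK'_mem.toLp K' with hx0def
  -- inner products in L²
  have hinner : ∀ (j : ℕ) (f : EuclideanSpace ℝ (Fin n) × EuclideanSpace ℝ (Fin n) → ℂ)
      (hf : MemLp f 2 (σ.prod σ)),
      ⟪v j, hf.toLp f⟫_ℂ = ∫ p, (starRingEnd ℂ) (e j p) * f p ∂(σ.prod σ) := by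
    intro j f hf
    rw [MeasureTheory.L2.inner_def]
    apply integral_congr_ae
    filter_upwards [(he_mem j).coeFn_toLp, hf.coeFn_toLp] with p h1 h2
    rw [hvdef]
    simp only
    rw [h1, h2, RCLike.inner_apply, mul_comm]
  -- orthonormality
  have hON : Orthonormal ℂ v := by
    rw [orthonormal_iff_ite]
    intro j k
    rw [show v k = (he_mem k).toLp (e k) from rfl, hinner j (e k) (he_mem k)]
    have hpm := integral_prod_mul (μ := σ) (ν := σ)
      (f := fun θ => g j θ * (starRingEnd ℂ) (g k θ))
      (g := fun ω => (starRingEnd ℂ) (g j ω) * g k ω)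
    have hpt : ∀ p : EuclideanSpace ℝ (Fin n) × EuclideanSpace ℝ (Fin n),
        (starRingEnd ℂ) (e j p) * e k p
          = (fun θ => g j θ * (starRingEnd ℂ) (g k θ)) p.1
            * (fun ω => (starRingEnd ℂ) (g j ω) * g k ω) p.2 := by
      intro p
      rw [hedef]
      simp only [map_mul, RingHomCompTriple.comp_apply, RingHom.id_apply, Complex.conj_conj]
      ring
    rw [integral_congr_ae (Filter.Eventually.of_forall hpt), hpm]
    have h1 : ∫ θ, g j θ * (starRingEnd ℂ) (g k θ) ∂σ
        = (starRingEnd ℂ) (∫ θ, (starRingEnd ℂ) (g j θ) * g k θ ∂σ) := by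
      rw [← integral_conj]
      apply integral_congr_ae
      filter_upwards with θ
      simp [map_mul]
    rw [h1, horth j k]
    by_cases h : j = k <;> simp [h]
  -- Fourier/Fubini identity
  have hr_inner : ∀ j, ((r j : ℝ) : ℂ) = ⟪v j, x0⟫_ℂ := by
    intro j
    rw [hx0def, hinner j K' hK'_mem]
    have hpt : ∀ p : EuclideanSpace ℝ (Fin n) × EuclideanSpace ℝ (Fin n),
        (starRingEnd ℂ) (e j p) * K' p
          = g j p.1 * (starRingEnd ℂ) (g j p.2) * ker p := by
      intro p
      by_cases h1 : g j p.1 = 0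
      · rw [hedef, hK'def]; simp [h1]
      · by_cases h2 : g j p.2 = 0
        · rw [hedef, hK'def]; simp [h2]
        · have hk1 : Kind p.1 = 1 := by
            rw [hKinddef, Set.indicator_of_mem (hsupp j (Function.mem_support.mpr h1))]
          have hk2 : Kind p.2 = 1 := by
            rw [hKinddef, Set.indicator_of_mem (hsupp j (Function.mem_support.mpr h2))]
          rw [hedef, hK'def]
          simp only [hk1, hk2, map_mul, Complex.conj_conj]
          ring
    rw [integral_congr_ae (Filter.Eventually.of_forall hpt)]
    rw [hrdef]
    exact key_identity σ w (g j) (hgint j)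
  -- norm of x0
  have hx0sq : ‖x0‖ ^ 2 = ∫ θ in K, ∫ ω in K, ‖ft wC (θ - ω)‖ ^ 2 ∂σ ∂σ := by
    have h1 : ⟪x0, x0⟫_ℂ = ((∫ p, ‖K' p‖ ^ 2 ∂(σ.prod σ) : ℝ) : ℂ) := by
      have ha : (∫ p, ((‖K' p‖ ^ 2 : ℝ) : ℂ) ∂(σ.prod σ))
          = ((∫ p, ‖K' p‖ ^ 2 ∂(σ.prod σ) : ℝ) : ℂ) := integral_ofReal
      rw [MeasureTheory.L2.inner_def, ← ha]
      apply integral_congr_ae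
      filter_upwards [hK'_mem.coeFn_toLp] with p hp
      rw [hx0def, hp, RCLike.inner_apply]
      rw [Complex.mul_conj, Complex.normSq_eq_norm_sq]
    have h2 : ‖x0‖ ^ 2 = ∫ p, ‖K' p‖ ^ 2 ∂(σ.prod σ) := by
      rw [@norm_sq_eq_re_inner ℂ, h1]
      simp
    rw [h2]
    have hint : Integrable (fun p => ‖K' p‖ ^ 2) (σ.prod σ) :=
      (memLp_two_iff_integrable_sq_norm hK'_aesm).mp hK'_mem
    rw [MeasureTheory.integral_prod _ hint, ← integral_indicator hKm]
    apply integral_congr_ae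
    filter_upwards with θ
    by_cases hθ : θ ∈ K
    · rw [Set.indicator_of_mem hθ, ← integral_indicator hKm]
      apply integral_congr_ae
      filter_upwards with ω
      by_cases hω : ω ∈ K
      · rw [Set.indicator_of_mem hω, hK'def, hKinddef]
        simp [Set.indicator_of_mem hθ, Set.indicator_of_mem hω, norm_mul, hkerdef]
      · rw [Set.indicator_of_notMem hω, hK'def, hKinddef]
        simp [Set.indicator_of_notMem hω]
    · rw [Set.indicator_of_notMem hθ]
      have hz : ∀ ω, ‖K' (θ, ω)‖ ^ 2 = 0 := by
        intro ω
        rw [hK'def, hKinddef]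
        simp [Set.indicator_of_notMem hθ]
      rw [integral_congr_ae (Filter.Eventually.of_forall hz)]
      simp
  have hrabs : ∀ j, |r j| = ‖⟪v j, x0⟫_ℂ‖ := by
    intro j
    rw [← hr_inner j, Complex.norm_real]
    exact (Real.norm_eq_abs _).symm
  have hr2sum : Summable (fun j => r j ^ 2) := by
    apply (hON.inner_products_summable x0).congr
    intro j
    rw [← hrabs j]
    exact _root_.sq_abs (r j)
  have htsum_r2 : ∑' j, r j ^ 2 ≤ ∫ θ in K, ∫ ω in K, ‖ft wC (θ - ω)‖ ^ 2 ∂σ ∂σ := by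
    rw [← hx0sq]
    calc ∑' j, r j ^ 2 = ∑' j, ‖⟪v j, x0⟫_ℂ‖ ^ 2 := by
          apply tsum_congr; intro j; rw [← hrabs j]
          exact (_root_.sq_abs (r j)).symm
      _ ≤ ‖x0‖ ^ 2 := hON.tsum_inner_products_le x0
  have habs_sum : Summable (fun j => |l j * r j|) := by
    apply Summable.of_nonneg_of_le (fun j => abs_nonneg _) (fun j => ?_)
      ((hl.add hr2sum).div_const 2)
    rw [abs_mul]
    nlinarith [sq_nonneg (|l j| - |r j|), _root_.sq_abs (l j), _root_.sq_abs (r j),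
      abs_nonneg (l j), abs_nonneg (r j)]
  have hlr_sum : Summable (fun j => l j * r j) := habs_sum.of_abs
  have hCS : ∑' j, |l j * r j| ≤ Real.sqrt (∑' j, l j ^ 2) * Real.sqrt (∑' j, r j ^ 2) := by
    apply Summable.tsum_le_of_sum_le habs_sum
    intro s
    have h1 : (∑ j ∈ s, |l j| * |r j|) ^ 2 ≤ (∑ j ∈ s, l j ^ 2) * (∑ j ∈ s, r j ^ 2) := by
      have h := Finset.sum_mul_sq_le_sq_mul_sq s (fun j => |l j|) (fun j => |r j|)
      simpa [_root_.sq_abs] using h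
    have h2 : ∑ j ∈ s, |l j * r j| = ∑ j ∈ s, |l j| * |r j| := by
      apply Finset.sum_congr rfl; intro j _; rw [abs_mul]
    rw [h2]
    have h3 : ∑ j ∈ s, |l j| * |r j|
        ≤ Real.sqrt ((∑ j ∈ s, l j ^ 2) * (∑ j ∈ s, r j ^ 2)) := by
      rw [show ∑ j ∈ s, |l j| * |r j| = Real.sqrt ((∑ j ∈ s, |l j| * |r j|) ^ 2) from
        (Real.sqrt_sq (Finset.sum_nonneg fun j _ =>
          mul_nonneg (abs_nonneg _) (abs_nonneg _))).symm]
      exact Real.sqrt_le_sqrt h1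
    refine le_trans h3 ?_
    rw [Real.sqrt_mul (Finset.sum_nonneg fun j _ => sq_nonneg _)]
    apply mul_le_mul
    · exact Real.sqrt_le_sqrt (Summable.sum_le_tsum s (fun j _ => sq_nonneg _) hl)
    · exact Real.sqrt_le_sqrt (Summable.sum_le_tsum s (fun j _ => sq_nonneg _) hr2sum)
    · positivity
    · positivity
  calc |∑' j, l j * r j| ≤ ∑' j, |l j * r j| := by
        rw [show |∑' j, l j * r j| = ‖∑' j, l j * r j‖ from (Real.norm_eq_abs _).symm]
        refine le_trans (norm_tsum_le_tsum_norm ?_) (le_of_eq ?_)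
        · simpa only [Real.norm_eq_abs] using habs_sum
        · apply tsum_congr; intro j; rw [Real.norm_eq_abs]
    _ ≤ Real.sqrt (∑' j, l j ^ 2) * Real.sqrt (∑' j, r j ^ 2) := hCS
    _ ≤ Real.sqrt (∑' j, l j ^ 2)
          * Real.sqrt (∫ θ in K, ∫ ω in K, ‖ft wC (θ - ω)‖ ^ 2 ∂σ ∂σ) :=
        mul_le_mul_of_nonneg_left (Real.sqrt_le_sqrt htsum_r2) (Real.sqrt_nonneg _)
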